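/- Let F be a field, let n ≥ 1, and let A ∈ M_n(F) be a non-derogatory matrix. Then for every monic polynomial q(x) ∈ F[x] of degree n whose trace coincides with the trace of A (i.e. the coefficient of x^{n-1} in q equals minus the trace of A), there exists a square-zero matrix N ∈ M_n(F) such that the characteristic polynomial of A + N equals q(x). -/

import Mathlib

open Polynomial Matrix

namespace PCN

variable {F : Type*} [Field F] {n : ℕ}

noncomputable def cmat (n : ℕ) (q : Polynomial F) : Matrix (Fin n) (Fin n) F :=
  Matrix.of fun i j =>
    (if (i : ℕ) = (j : ℕ) + 1 then 1 else 0) + (if (j : ℕ) = n - 1 then -q.coeff i else 0)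

lemma cmat_apply (q : Polynomial F) (i j : Fin n) :
    cmat n q i j = (if (i : ℕ) = (j : ℕ) + 1 then 1 else 0)
      + (if (j : ℕ) = n - 1 then -q.coeff i else 0) := rfl

lemma sum_mulVec {ι : Type*} (s : Finset ι) (M : ι → Matrix (Fin n) (Fin n) F)
    (v : Fin n → F) : (∑ i ∈ s, M i) *ᵥ v = ∑ i ∈ s, (M i *ᵥ v) := by
  induction s using Finset.cons_induction with
  | empty => simp
  | cons a s ha ih => simp [Finset.sum_cons, Matrix.add_mulVec, ih]

lemma aeval_mulVec (M : Matrix (Fin n) (Fin n) F) {p : Polynomial F} {N : ℕ}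
    (h : p.natDegree < N) (w : Fin n → F) :
    (aeval M p) *ᵥ w = ∑ k ∈ Finset.range N, p.coeff k • ((M ^ k) *ᵥ w) := by
  rw [aeval_eq_sum_range' h, sum_mulVec]
  exact Finset.sum_congr rfl fun k _ => smul_mulVec ..

lemma cmat_mulVec_single (q : Polynomial F) (k : Fin n) (hk : (k : ℕ) + 1 < n) :
    cmat n q *ᵥ Pi.single k 1 = Pi.single (⟨(k : ℕ) + 1, hk⟩ : Fin n) 1 := by
  ext i
  rw [mulVec_single_one]
  change cmat n q i k = _
  have hkne : (k : ℕ) ≠ n - 1 := by omega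
  simp only [cmat_apply, hkne, if_false, add_zero, mul_one, Pi.single_apply]
  by_cases h : (i : ℕ) = (k : ℕ) + 1
  · rw [if_pos h, if_pos (by exact Fin.ext h)]
  · rw [if_neg h, if_neg (by simpa [Fin.ext_iff] using h)]

lemma cmat_pow_mulVec (q : Polynomial F) (hn : 0 < n) (k : ℕ) (hk : k < n) :
    (cmat n q ^ k) *ᵥ Pi.single (⟨0, hn⟩ : Fin n) 1 = Pi.single (⟨k, hk⟩ : Fin n) 1 := by
  induction k with
  | zero => rw [pow_zero, Matrix.one_mulVec]
  | succ k ih =>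
    rw [pow_succ', ← Matrix.mulVec_mulVec, ih (by omega)]
    exact cmat_mulVec_single q ⟨k, by omega⟩ hk

lemma sum_smul_single (g : Fin n → F) : ∑ i : Fin n, g i • (Pi.single i 1 : Fin n → F) = g := by
  ext j
  simp [Finset.sum_apply, Pi.single_apply]

lemma aeval_cmat_mulVec_e0 (q : Polynomial F) (hn : 0 < n) {p : Polynomial F}
    (hp : p.natDegree < n) :
    (aeval (cmat n q) p) *ᵥ Pi.single (⟨0, hn⟩ : Fin n) 1 = fun i : Fin n => p.coeff i := by
  rw [aeval_mulVec _ hp, ← Fin.sum_univ_eq_sum_range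
    (fun k => p.coeff k • ((cmat n q ^ k) *ᵥ Pi.single (⟨0, hn⟩ : Fin n) 1))]
  have : ∀ i : Fin n, p.coeff i • ((cmat n q ^ (i : ℕ)) *ᵥ Pi.single (⟨0, hn⟩ : Fin n) 1)
      = p.coeff i • (Pi.single i 1 : Fin n → F) := by
    intro i
    rw [cmat_pow_mulVec q hn i i.isLt]
  rw [Finset.sum_congr rfl fun i _ => this i, sum_smul_single]

lemma aeval_cmat_self_mulVec_e0 (q : Polynomial F) (hq : q.Monic) (hqdeg : q.natDegree = n)
    (hn : 0 < n) :
    (aeval (cmat n q) q) *ᵥ Pi.single (⟨0, hn⟩ : Fin n) 1 = 0 := by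
  have hdegq : q.degree = (n : ℕ) := by
    rw [degree_eq_natDegree hq.ne_zero, hqdeg]
  have hdeg : (q - X ^ n).natDegree < n := by
    rcases eq_or_ne (q - X ^ n) 0 with h | h
    · simpa [h] using hn
    · rw [← Nat.cast_lt (α := WithBot ℕ), ← degree_eq_natDegree h]
      calc (q - X ^ n).degree < q.degree := by
            apply degree_sub_lt
            · rw [hdegq, degree_X_pow]
            · exact hq.ne_zero
            · rw [hq.leadingCoeff, leadingCoeff_X_pow]
          _ = (n : ℕ) := hdegq
  have hsplit : aeval (cmat n q) q = aeval (cmat n q) ((X : F[X]) ^ n) + aeval (cmat n q) (q - (X : F[X]) ^ n) := by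
    rw [← map_add]; congr 1; ring
  rw [hsplit, Matrix.add_mulVec, aeval_cmat_mulVec_e0 q hn hdeg]
  have hXn : (aeval (cmat n q) (X ^ n : F[X])) *ᵥ Pi.single (⟨0, hn⟩ : Fin n) 1
      = fun i : Fin n => -q.coeff i := by
    rw [map_pow, aeval_X]
    have hn1 : n - 1 + 1 = n := by omega
    have : cmat n q ^ n = cmat n q * cmat n q ^ (n - 1) := by
      rw [← pow_succ', hn1]
    rw [this, ← Matrix.mulVec_mulVec, cmat_pow_mulVec q hn (n - 1) (by omega)]
    ext i
    rw [mulVec_single]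
    have h1 : (i : ℕ) ≠ (n - 1) + 1 := by omega
    simp [cmat_apply, h1]
  rw [hXn]
  ext i
  have : ((i : ℕ) = n) = False := by simp [Nat.ne_of_lt i.isLt]
  simp [coeff_X_pow, this]

lemma cmat_cyclic_e0 (q : Polynomial F) (hq : q.Monic) (hqdeg : q.natDegree = n)
    (hn : 0 < n) (p : Polynomial F)
    (hp : (aeval (cmat n q) p) *ᵥ Pi.single (⟨0, hn⟩ : Fin n) 1 = 0) : q ∣ p := by
  rw [← modByMonic_eq_zero_iff_dvd hq]
  have hdec : p %ₘ q + q * (p /ₘ q) = p := modByMonic_add_div p q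
  have hrdeg : (p %ₘ q).natDegree < n := by
    rcases eq_or_ne (p %ₘ q) 0 with h | h
    · simpa [h] using hn
    · rw [← Nat.cast_lt (α := WithBot ℕ), ← degree_eq_natDegree h]
      calc (p %ₘ q).degree < q.degree := degree_modByMonic_lt p hq
        _ = (n : ℕ) := by rw [degree_eq_natDegree hq.ne_zero, hqdeg]
  have hcomm : (aeval (cmat n q) (q * (p /ₘ q))) *ᵥ Pi.single (⟨0, hn⟩ : Fin n) 1 = 0 := by
    rw [mul_comm, _root_.map_mul, ← Matrix.mulVec_mulVec,
      aeval_cmat_self_mulVec_e0 q hq hqdeg hn, Matrix.mulVec_zero]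
  have hr : (aeval (cmat n q) (p %ₘ q)) *ᵥ Pi.single (⟨0, hn⟩ : Fin n) 1 = 0 := by
    have heq : p %ₘ q = p - q * (p /ₘ q) := by linear_combination hdec
    rw [heq, map_sub, Matrix.sub_mulVec, hp, hcomm, sub_zero]
  rw [aeval_cmat_mulVec_e0 q hn hrdeg] at hr
  ext k
  rcases lt_or_ge k n with hk | hk
  · simpa using congrFun hr ⟨k, hk⟩
  · simp [coeff_eq_zero_of_natDegree_lt (lt_of_lt_of_le hrdeg hk)]

lemma charpoly_cmat (q : Polynomial F) (hq : q.Monic) (hqdeg : q.natDegree = n)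
    (hn : 0 < n) : (cmat n q).charpoly = q := by
  have h1 : q ∣ minpoly F (cmat n q) := by
    apply cmat_cyclic_e0 q hq hqdeg hn
    rw [minpoly.aeval, Matrix.zero_mulVec]
  have h3 : q ∣ (cmat n q).charpoly := h1.trans ((cmat n q).minpoly_dvd_charpoly)
  exact (eq_of_dvd_of_natDegree_le_of_leadingCoeff h3
    (by rw [(cmat n q).charpoly_natDegree_eq_dim, Fintype.card_fin, hqdeg])
    (by rw [hq.leadingCoeff, ((cmat n q).charpoly_monic).leadingCoeff])).symm

lemma mulVec_sum {ι : Type*} (s : Finset ι) (M : Matrix (Fin n) (Fin n) F)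
    (v : ι → Fin n → F) : M *ᵥ (∑ i ∈ s, v i) = ∑ i ∈ s, M *ᵥ v i :=
  map_sum M.mulVecLin v s

def annI (A : Matrix (Fin n) (Fin n) F) (v : Fin n → F) : Ideal F[X] where
  carrier := {p | (aeval A p) *ᵥ v = 0}
  zero_mem' := by simp [Set.mem_setOf_eq]
  add_mem' := by
    intro a b ha hb
    simp only [Set.mem_setOf_eq] at *
    rw [map_add, Matrix.add_mulVec, ha, hb, add_zero]
  smul_mem' := by
    intro c x hx
    simp only [Set.mem_setOf_eq, smul_eq_mul] at *
    rw [_root_.map_mul, ← Matrix.mulVec_mulVec, hx, Matrix.mulVec_zero]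

lemma mem_annI {A : Matrix (Fin n) (Fin n) F} {v : Fin n → F} {p : F[X]} :
    p ∈ annI A v ↔ (aeval A p) *ᵥ v = 0 := Iff.rfl

lemma pow_dvd_of_annI {A : Matrix (Fin n) (Fin n) F} {v : Fin n → F} {p : F[X]}
    (hp : Prime p) {e : ℕ} (hmem : p ^ e ∈ annI A v)
    (hnot : p ^ (e - 1) ∉ annI A v) {h : F[X]} (hh : h ∈ annI A v) : p ^ e ∣ h := by
  classical
  set d := EuclideanDomain.gcd h (p ^ e) with hd
  have hdJ : d ∈ annI A v := by
    rw [hd, EuclideanDomain.gcd_eq_gcd_ab]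
    exact Ideal.add_mem _ ((annI A v).mul_mem_right _ hh) ((annI A v).mul_mem_right _ hmem)
  have hdvd : d ∣ p ^ e := EuclideanDomain.gcd_dvd_right h (p ^ e)
  obtain ⟨i, hie, hassoc⟩ := (dvd_prime_pow hp e).mp hdvd
  obtain ⟨u, hu⟩ := hassoc
  have hpiJ : (p : F[X]) ^ i ∈ annI A v := by
    rw [← hu]; exact (annI A v).mul_mem_right _ hdJ
  have hie' : i = e := by
    by_contra hne
    refine hnot ?_
    have heq : (p : F[X]) ^ (e - 1) = p ^ i * p ^ (e - 1 - i) := by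
      rw [← pow_add]; congr 1; omega
    rw [heq]
    exact (annI A v).mul_mem_right _ hpiJ
  have hassoc2 : Associated d ((p : F[X]) ^ e) := ⟨u, by rw [hu, hie']⟩
  exact hassoc2.symm.dvd.trans (EuclideanDomain.gcd_dvd_left h (p ^ e))

lemma exists_mulVec_ne_zero {M : Matrix (Fin n) (Fin n) F} (hM : M ≠ 0) :
    ∃ w : Fin n → F, M *ᵥ w ≠ 0 := by
  by_contra hcon
  push_neg at hcon
  refine hM ?_
  ext i j
  have := congrFun (hcon (Pi.single j 1)) i
  rw [mulVec_single] at this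
  simpa using this

lemma exists_cyclic (hn : 0 < n) (A : Matrix (Fin n) (Fin n) F)
    (hA : minpoly F A = A.charpoly) :
    ∃ v : Fin n → F, ∀ p : F[X], (aeval A p) *ᵥ v = 0 → A.charpoly ∣ p := by
  classical
  set m := A.charpoly with hm
  have hm0 : m ≠ 0 := (A.charpoly_monic).ne_zero
  have haevalm : aeval A m = 0 := A.aeval_self_charpoly
  have hmin : ∀ p : F[X], aeval A p = 0 → m ∣ p := fun p h => hA ▸ minpoly.dvd F A h
  set fs := UniqueFactorizationMonoid.normalizedFactors m with hfs
  set s := fs.toFinset with hs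
  set e : F[X] → ℕ := fun p => fs.count p with he
  have hprime : ∀ p ∈ s, Prime p := fun p hp =>
    UniqueFactorizationMonoid.prime_of_normalized_factor p (Multiset.mem_toFinset.mp hp)
  have hnorm : ∀ p ∈ s, normalize p = p := fun p hp =>
    UniqueFactorizationMonoid.normalize_normalized_factor p (Multiset.mem_toFinset.mp hp)
  have hassoc : Associated (∏ p ∈ s, p ^ e p) m := by
    rw [← Finset.prod_multiset_count]
    exact UniqueFactorizationMonoid.prod_normalizedFactors hm0
  have hepos : ∀ p ∈ s, 1 ≤ e p := fun p hp =>
    Multiset.count_pos.mpr (Multiset.mem_toFinset.mp hp)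
  have hdistinct : ∀ p ∈ s, ∀ r ∈ s, p ∣ r → p = r := by
    intro p hp r hr hdvd
    have hass := ((hprime p hp).irreducible.associated_of_dvd (hprime r hr).irreducible hdvd)
    rw [← hnorm p hp, ← hnorm r hr]
    exact normalize_eq_normalize hass.dvd hass.symm.dvd
  set c : F[X] → F[X] := fun p => ∏ r ∈ s.erase p, r ^ e r with hc
  have hpec : ∀ p ∈ s, p ^ e p * c p = ∏ r ∈ s, r ^ e r := fun p hp =>
    Finset.mul_prod_erase s (fun r => r ^ e r) hp
  have haevalprod : aeval A (∏ r ∈ s, r ^ e r) = 0 := by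
    obtain ⟨u, hu⟩ := hassoc
    have h1 : aeval A (∏ r ∈ s, r ^ e r) * aeval A (u : F[X]) = 0 := by
      rw [← _root_.map_mul, hu, haevalm]
    have h2 : IsUnit (aeval A (u : F[X])) := u.isUnit.map (aeval A)
    obtain ⟨w, hw⟩ := h2.exists_right_inv
    calc aeval A (∏ r ∈ s, r ^ e r)
        = aeval A (∏ r ∈ s, r ^ e r) * (aeval A (u : F[X]) * w) := by rw [hw, mul_one]
      _ = 0 := by rw [← mul_assoc, h1, zero_mul]
  have hpnc : ∀ p ∈ s, ¬ p ∣ c p := by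
    intro p hp hdvd
    rw [hc] at hdvd
    obtain ⟨r, hr, hdr⟩ := ((hprime p hp).dvd_finset_prod_iff _).mp hdvd
    have : p = r := hdistinct p hp r (Finset.mem_of_mem_erase hr)
      ((hprime p hp).dvd_of_dvd_pow hdr)
    exact Finset.ne_of_mem_erase hr this.symm
  have hchoice : ∀ p : F[X], ∃ w : Fin n → F,
      p ∈ s → (aeval A (p ^ (e p - 1) * c p)) *ᵥ w ≠ 0 := by
    intro p
    by_cases hp : p ∈ s
    · have hne : aeval A (p ^ (e p - 1) * c p) ≠ 0 := by
        intro h0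
        have hdvdm : m ∣ p ^ (e p - 1) * c p := hmin _ h0
        have h1a : p ^ e p * c p ∣ m := by rw [hpec p hp]; exact hassoc.dvd
        have h1 : p ^ e p * c p ∣ p ^ (e p - 1) * c p := h1a.trans hdvdm
        have hee : p ^ e p = p ^ (e p - 1) * p := by
          rw [← pow_succ]; congr 1; have := hepos p hp; omega
        rw [hee, mul_assoc] at h1
        have h3 : p * c p ∣ c p :=
          (mul_dvd_mul_iff_left (pow_ne_zero _ (hprime p hp).ne_zero)).mp h1
        exact hpnc p hp ((dvd_mul_right p (c p)).trans h3)
      obtain ⟨w, hw⟩ := exists_mulVec_ne_zero hne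
      exact ⟨w, fun _ => hw⟩
    · exact ⟨0, fun h => absurd h hp⟩
  choose w hw using hchoice
  set vp : F[X] → (Fin n → F) := fun p => (aeval A (c p)) *ᵥ w p with hvp
  refine ⟨∑ p ∈ s, vp p, ?_⟩
  intro f hf
  have hkey : ∀ p ∈ s, p ^ e p ∣ f := by
    intro p hp
    have hmemJ : p ^ e p ∈ annI A (vp p) := by
      rw [mem_annI, hvp]
      simp only
      rw [Matrix.mulVec_mulVec, ← _root_.map_mul, hpec p hp, haevalprod, Matrix.zero_mulVec]
    have hnotJ : p ^ (e p - 1) ∉ annI A (vp p) := by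
      rw [mem_annI]
      intro h0
      refine hw p hp ?_
      rw [_root_.map_mul, ← Matrix.mulVec_mulVec]
      exact h0
    have hfc : f * c p ∈ annI A (vp p) := by
      have hterm : ∀ r ∈ s, r ≠ p → (aeval A (f * c p)) *ᵥ vp r = 0 := by
        intro r hr hrp
        rw [hvp]
        simp only
        rw [Matrix.mulVec_mulVec, ← _root_.map_mul]
        have hd1 : (∏ t ∈ s, t ^ e t) ∣ f * c p * c r := by
          rw [← hpec r hr]
          have hr2 : r ^ e r ∣ c p :=
            Finset.dvd_prod_of_mem _ (Finset.mem_erase.mpr ⟨hrp, hr⟩)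
          exact mul_dvd_mul (hr2.trans (dvd_mul_left _ _)) dvd_rfl
        obtain ⟨t, ht⟩ := hd1
        rw [ht, _root_.map_mul, haevalprod, zero_mul, Matrix.zero_mulVec]
      rw [mem_annI]
      have hsum : (aeval A (f * c p)) *ᵥ (∑ r ∈ s, vp r) = 0 := by
        rw [mul_comm f (c p), _root_.map_mul, ← Matrix.mulVec_mulVec, hf, Matrix.mulVec_zero]
      rw [mulVec_sum] at hsum
      have heq := Finset.sum_eq_single_of_mem p hp
        (fun r hr hrp => hterm r hr hrp)
      rw [heq] at hsum
      exact hsum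
    have hpef : p ^ e p ∣ f * c p := pow_dvd_of_annI (hprime p hp) hmemJ hnotJ hfc
    have hcop : IsCoprime ((p : F[X]) ^ e p) (c p) := by
      refine IsCoprime.pow_left ?_
      refine isCoprime_of_prime_dvd ?_ ?_
      · rintro ⟨hp0, -⟩; exact (hprime p hp).ne_zero hp0
      · intro z hz hzp hzc
        refine hpnc p hp ?_
        exact ((hz.irreducible.associated_of_dvd (hprime p hp).irreducible
          hzp).symm.dvd.trans hzc)
    exact hcop.dvd_of_dvd_mul_right hpef
  have hprodf : (∏ p ∈ s, p ^ e p) ∣ f := by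
    refine Finset.prod_dvd_of_coprime ?_ hkey
    intro p hp r hr hpr
    refine IsCoprime.pow ?_
    refine isCoprime_of_prime_dvd ?_ ?_
    · rintro ⟨hp0, -⟩; exact (hprime p hp).ne_zero hp0
    · intro z hz hzp hzr
      refine hpr ?_
      exact hdistinct p hp r hr
        ((hz.irreducible.associated_of_dvd (hprime p hp).irreducible hzp).symm.dvd.trans hzr)
  exact (hassoc.symm.dvd).trans hprodf

lemma monic_sub_X_pow_natDegree_lt {q : F[X]} (hq : q.Monic) (hqdeg : q.natDegree = n)
    (hn : 0 < n) : (q - (X : F[X]) ^ n).natDegree < n := by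
  rcases eq_or_ne (q - (X : F[X]) ^ n) 0 with h | h
  · simpa [h] using hn
  · rw [← Nat.cast_lt (α := WithBot ℕ), ← degree_eq_natDegree h]
    calc (q - (X : F[X]) ^ n).degree < q.degree := by
          apply degree_sub_lt
          · rw [degree_eq_natDegree hq.ne_zero, hqdeg, degree_X_pow]
          · exact hq.ne_zero
          · rw [hq.leadingCoeff, leadingCoeff_X_pow]
        _ = (n : ℕ) := by rw [degree_eq_natDegree hq.ne_zero, hqdeg]

end PCN

open PCN in
theorem prescribed_charpoly_nonderogatory
    (F : Type*) [Field F] (n : ℕ) (hn : 1 ≤ n)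
    (A : Matrix (Fin n) (Fin n) F)
    (hA : minpoly F A = A.charpoly)
    (q : Polynomial F) (hq : q.Monic) (hqdeg : q.natDegree = n)
    (htr : q.coeff (n - 1) = - A.trace) :
    ∃ N : Matrix (Fin n) (Fin n) F, N ^ 2 = 0 ∧ (A + N).charpoly = q := by
  classical
  have hn0 : 0 < n := hn
  set m := A.charpoly with hm
  have hmmonic : m.Monic := A.charpoly_monic
  have hmdeg : m.natDegree = n := by
    rw [hm, A.charpoly_natDegree_eq_dim, Fintype.card_fin]
  obtain ⟨v, hv⟩ := exists_cyclic hn0 A hA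
  set b : Fin n → (Fin n → F) := fun k => (A ^ (k : ℕ)) *ᵥ v with hb
  -- A^n acts on v as a combination of the b's
  have hAn : (A ^ n) *ᵥ v = ∑ k : Fin n, (-(m.coeff k)) • b k := by
    have hsub : (m - (X : F[X]) ^ n).natDegree < n :=
      monic_sub_X_pow_natDegree_lt hmmonic hmdeg hn0
    have h5 : aeval A ((X : F[X]) ^ n) = A ^ n := by rw [map_pow, aeval_X]
    have hXn : (0 : Matrix (Fin n) (Fin n) F)
        = A ^ n + aeval A (m - (X : F[X]) ^ n) := by
      rw [← h5, ← map_add, ← A.aeval_self_charpoly, ← hm]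
      congr 1
      ring
    have hAneq : (A ^ n : Matrix (Fin n) (Fin n) F) = - aeval A (m - (X : F[X]) ^ n) :=
      eq_neg_of_add_eq_zero_left hXn.symm
    rw [hAneq, Matrix.neg_mulVec, aeval_mulVec A hsub v,
      ← Fin.sum_univ_eq_sum_range (fun k => (m - (X : F[X]) ^ n).coeff k • ((A ^ k) *ᵥ v)),
      ← Finset.sum_neg_distrib]
    refine Finset.sum_congr rfl fun k _ => ?_
    have hco : (m - (X : F[X]) ^ n).coeff (k : ℕ) = m.coeff (k : ℕ) := by
      have : ((k : ℕ) = n) = False := by simp [Nat.ne_of_lt k.isLt]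
      simp [coeff_X_pow, this]
    rw [hco, ← neg_smul]
  -- linear independence
  have hli : LinearIndependent F b := by
    rw [Fintype.linearIndependent_iff]
    intro g hg
    set p : F[X] := ∑ i : Fin n, Polynomial.C (g i) * X ^ (i : ℕ) with hp
    have hcoeff : ∀ i : Fin n, p.coeff (i : ℕ) = g i := by
      intro i
      rw [hp, finset_sum_coeff]
      rw [Finset.sum_eq_single i]
      · simp [coeff_C_mul, coeff_X_pow]
      · intro j _ hji
        have : ((i : ℕ) = (j : ℕ)) = False := by
          simp [Fin.val_eq_val, hji.symm]
        simp [coeff_C_mul, coeff_X_pow, this]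
      · intro h; exact absurd (Finset.mem_univ i) h
    have haev : (aeval A p) *ᵥ v = 0 := by
      rw [hp, map_sum, PCN.sum_mulVec]
      have hterm : ∀ i : Fin n,
          (aeval A (Polynomial.C (g i) * X ^ (i : ℕ))) *ᵥ v = g i • b i := by
        intro i
        rw [_root_.map_mul, aeval_C, map_pow, aeval_X, ← Algebra.smul_def,
          smul_mulVec]
      rw [Finset.sum_congr rfl fun i _ => hterm i]
      exact hg
    have hdvd := hv p haev
    have hpz : p = 0 := by
      by_contra hpz
      have hle := Polynomial.natDegree_le_of_dvd hdvd hpz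
      rw [← hm, hmdeg] at hle
      have hplt : p.natDegree < n := by
        have : p.natDegree ≤ n - 1 := by
          refine natDegree_sum_le_of_forall_le _ _ fun i _ => ?_
          exact (natDegree_C_mul_X_pow_le _ _).trans (by omega)
        omega
      omega
    intro i
    rw [← hcoeff i, hpz, coeff_zero]
  haveI : Nonempty (Fin n) := ⟨⟨0, hn0⟩⟩
  have hcard : Fintype.card (Fin n) = Module.finrank F (Fin n → F) := by
    rw [Fintype.card_fin, Module.finrank_pi]
    exact (Fintype.card_fin n).symm
  set B := basisOfLinearIndependentOfCardEqFinrank hli hcard with hB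
  have hBc : ∀ k, B k = b k := fun k =>
    congrFun (coe_basisOfLinearIndependentOfCardEqFinrank hli hcard) k
  -- the matrix of A in basis B is the companion matrix of m
  have hmat : LinearMap.toMatrix B B (Matrix.toLin' A) = cmat n m := by
    ext i j
    rw [LinearMap.toMatrix_apply]
    by_cases hj : (j : ℕ) + 1 < n
    · have hBj : Matrix.toLin' A (B j) = B ⟨(j : ℕ) + 1, hj⟩ := by
        rw [hBc, hBc, Matrix.toLin'_apply, hb]
        simp only
        rw [Matrix.mulVec_mulVec, ← pow_succ']
      rw [hBj, B.repr_self, Finsupp.single_apply, cmat_apply]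
      have hjn : (j : ℕ) ≠ n - 1 := by omega
      rw [if_neg hjn, add_zero]
      by_cases h : (i : ℕ) = (j : ℕ) + 1
      · rw [if_pos h, if_pos (Fin.ext h.symm)]
      · rw [if_neg h, if_neg (fun hc => h (by rw [← hc]))]
    · have hj' : (j : ℕ) + 1 = n := by have := j.isLt; omega
      have hBj : Matrix.toLin' A (B j) = ∑ k : Fin n, (-(m.coeff k)) • B k := by
        rw [hBc, Matrix.toLin'_apply, hb]
        simp only
        rw [Matrix.mulVec_mulVec, ← pow_succ', hj', hAn]
        exact Finset.sum_congr rfl fun k _ => by rw [hBc]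
      rw [hBj]
      have := congrFun (B.repr_sum_self (fun k => -(m.coeff k))) i
      rw [this, cmat_apply]
      have h1 : (i : ℕ) ≠ (j : ℕ) + 1 := by have := i.isLt; omega
      have h2 : (j : ℕ) = n - 1 := by omega
      rw [if_neg h1, if_pos h2, zero_add]
  -- the square-zero difference
  set D := cmat n q - cmat n m with hD
  have hD2 : D * D = 0 := by
    have hcoeffeq : m.coeff (n - 1) - q.coeff (n - 1) = 0 := by
      rw [htr, hm]
      have := A.trace_eq_neg_charpoly_coeff
      rw [Fintype.card_fin] at this
      rw [this]
      ring
    ext i j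
    rw [Matrix.mul_apply]
    refine Finset.sum_eq_zero fun k _ => ?_
    have hDe : ∀ a c : Fin n, D a c = if (c : ℕ) = n - 1 then m.coeff a - q.coeff a else 0 := by
      intro a c
      rw [hD, Matrix.sub_apply, cmat_apply, cmat_apply]
      by_cases h : (c : ℕ) = n - 1 <;> simp [h] <;> ring
    by_cases hk : (k : ℕ) = n - 1
    · have : D k j = 0 := by
        rw [hDe]
        by_cases h : (j : ℕ) = n - 1
        · rw [if_pos h]
          have hkval : (k : ℕ) = n - 1 := hk
          have : m.coeff (k : ℕ) - q.coeff (k : ℕ) = 0 := by rw [hkval]; exact hcoeffeq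
          exact this
        · rw [if_neg h]
      rw [this, mul_zero]
    · have : D i k = 0 := by rw [hDe, if_neg hk]
      rw [this, zero_mul]
  refine ⟨LinearMap.toMatrix' (Matrix.toLin B B D), ?_, ?_⟩
  · rw [pow_two, ← LinearMap.toMatrix'_comp, ← Matrix.toLin_mul B B B, hD2]
    simp
  · have h1 : A + LinearMap.toMatrix' (Matrix.toLin B B D)
        = LinearMap.toMatrix' (Matrix.toLin' A + Matrix.toLin B B D) := by
      rw [map_add, LinearMap.toMatrix'_toLin']
    rw [h1, ← LinearMap.toMatrix_eq_toMatrix', LinearMap.charpoly_toMatrix,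
      ← LinearMap.charpoly_toMatrix (Matrix.toLin' A + Matrix.toLin B B D) B]
    have h4 : LinearMap.toMatrix B B (Matrix.toLin' A + Matrix.toLin B B D)
        = cmat n q := by
      rw [map_add, LinearMap.toMatrix_toLin, hmat, hD]
      abel
    rw [h4]
    exact charpoly_cmat q hq hqdeg hn0
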